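/- The code S_q^{(k)}(n), consisting of all words of length n over \{0,...,q-1\} that begin with exactly k zeros (positions 1 through k are 0, position k+1 is nonzero), end with a nonzero symbol, and whose suffix from position k+1 to n contains no k consecutive zeros, is a non-overlapping code. -/
import Mathlib


/-- A code, given as a set of words, is non-overlapping if (1) no nonempty proper
prefix of a codeword equals a nonempty proper suffix of a codeword (including of
itself), and (2) no codeword contains a distinct codeword as a contiguous subword. -/
def NonOverlapping {α : Type*} (S : Set (List α)) : Prop :=
  (∀ u ∈ S, ∀ v ∈ S, ∀ p : List α, p ≠ [] → p ≠ u → p ≠ v → p <+: u → ¬ p <:+ v) ∧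
  (∀ u ∈ S, ∀ v ∈ S, u ≠ v → ¬ v <:+: u)

/-- The code `S_q^{(k)}(n)` of all words of length `n` over
`{0, …, q-1}` that begin with exactly `k` zeros (positions `0, …, k-1` are `0`,
position `k` is nonzero), end with a nonzero symbol, and whose suffix from
position `k` onwards contains no `k` consecutive zeros, is non-overlapping. -/
theorem stmt5 (n q k : ℕ) (hn : 2 ≤ n) (hq : 2 ≤ q) (hk1 : 1 ≤ k) (hk2 : k ≤ n - 1) :
    NonOverlapping {w : List ℕ | w.length = n ∧ (∀ a ∈ w, a < q) ∧
      (∀ i < k, w.getD i 0 = 0) ∧ w.getD k 0 ≠ 0 ∧ w.getD (n - 1) 0 ≠ 0 ∧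
      ∀ i, k ≤ i → i + k ≤ n → ¬ (∀ j < k, w.getD (i + j) 0 = 0)} := by
  constructor
  · rintro u ⟨hul, -, hu0, -, -, -⟩ v ⟨hvl, -, -, hvk, hvlast, hvno⟩ p hpne hpu hpv
      ⟨t, ht⟩ ⟨s, hs⟩
    have hm0 : 1 ≤ p.length := by
      cases p with
      | nil => exact absurd rfl hpne
      | cons a l => simp
    have hlu : p.length + t.length = n := by
      have := congrArg List.length ht; simpa [hul] using this
    have hlv : s.length + p.length = n := by
      have := congrArg List.length hs; simpa [hvl] using this
    have htne : t ≠ [] := by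
      rintro rfl; rw [List.append_nil] at ht; exact hpu ht
    have hmn : p.length < n := by
      have : 1 ≤ t.length := by
        cases t with
        | nil => exact absurd rfl htne
        | cons a l => simp
      omega
    have hup : ∀ j < p.length, u.getD j 0 = p.getD j 0 := by
      intro j hj; rw [← ht, List.getD_append _ _ _ _ hj]
    have hvp : ∀ j < p.length, v.getD (s.length + j) 0 = p.getD j 0 := by
      intro j hj
      rw [← hs, List.getD_append_right _ _ _ _ (by omega)]
      congr 1; omega
    rcases le_or_gt p.length k with hcase | hcase
    · -- p consists of zeros, but its last symbol is v's last symbol, nonzero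
      have h1 : u.getD (p.length - 1) 0 = 0 := hu0 _ (by omega)
      have h2 : v.getD (s.length + (p.length - 1)) 0 = p.getD (p.length - 1) 0 :=
        hvp _ (by omega)
      have h3 : s.length + (p.length - 1) = n - 1 := by omega
      rw [h3] at h2
      rw [hup _ (by omega)] at h1
      exact hvlast (h2.trans h1)
    · rcases le_or_gt (p.length + k) n with hcase2 | hcase2
      · -- k consecutive zeros in v starting at s.length ≥ k
        refine hvno s.length (by omega) (by omega) ?_
        intro j hj
        rw [hvp j (by omega), ← hup j (by omega)]
        exact hu0 j hj
      · -- v's position k is covered by zeros of p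
        have hj : s.length + (p.length + k - n) = k := by omega
        have := hvp (p.length + k - n) (by omega)
        rw [hj] at this
        rw [← hup _ (by omega)] at this
        exact hvk (this.trans (hu0 _ (by omega)))
  · rintro u ⟨hul, -⟩ v ⟨hvl, -⟩ hne hinf
    exact hne (hinf.sublist.eq_of_length (by rw [hul, hvl])).symm
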